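/- For bijections L, π : C → Fin n, the vote π is coincident with L (single-peaked w.r.t. L) if and only if for every threshold j, the set {c ∈ C : π(c) ≥ j} lies consecutively in L, i.e., forms an interval of L-values. -/
import Mathlib


/-- A vote `π` is coincident with (single-peaked w.r.t.) a societal order `L`. -/
def Coincident {C : Type*} {n : ℕ} (L π : C ≃ Fin n) : Prop :=
  ∀ a b c : C, ((L a < L b ∧ L b < L c) ∨ (L c < L b ∧ L b < L a)) →
    π b < π c → π a < π b

/-- Interval characterization of single-peakedness: `π` is coincident with `L`
iff every upper set `{c : π c ≥ j}` lies consecutively in `L`. -/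
theorem coincident_iff_upper_sets_consecutive {C : Type*} {n : ℕ}
    (L π : C ≃ Fin n) :
    Coincident L π ↔
      ∀ j : Fin n, ∀ c₁ c₂ c : C,
        j ≤ π c₁ → j ≤ π c₂ → L c₁ < L c → L c < L c₂ → j ≤ π c := by
  constructor
  · intro hco j c₁ c₂ c h1 h2 hl1 hl2
    by_contra h
    push_neg at h
    have hc2 : π c < π c₂ := lt_of_lt_of_le h h2
    have := hco c₁ c c₂ (Or.inl ⟨hl1, hl2⟩) hc2
    exact absurd (lt_of_lt_of_le h h1) (not_lt.mpr this.le)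
  · intro h a b c hord hbc
    by_contra hab
    push_neg at hab
    have hne : a ≠ b := by
      intro e; subst e
      rcases hord with ⟨h1, _⟩ | ⟨_, h2⟩
      · exact lt_irrefl _ h1
      · exact lt_irrefl _ h2
    have hba : π b < π a := lt_of_le_of_ne hab (fun e => hne (π.injective e.symm))
    rcases hord with ⟨h1, h2⟩ | ⟨h1, h2⟩
    · have := h (min (π a) (π c)) a c b (min_le_left _ _) (min_le_right _ _) h1 h2
      exact absurd this (not_le.mpr (lt_min hba hbc))
    · have := h (min (π a) (π c)) c a b (min_le_right _ _) (min_le_left _ _) h1 h2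
      exact absurd this (not_le.mpr (lt_min hba hbc))
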